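/- Let y ∈ ℝⁿ, Φ ∈ ℝ^{n×p}, and fixed nonnegative constants c₁,…,c_p. Let 𝒰 = {(ΔΦ₁,…,ΔΦ_p) : ‖ΔΦᵢ‖₂ ≤ cᵢ for each i}. Then for every β ∈ ℝᵖ with y ≠ Φβ, max_{ΔΦ ∈ 𝒰} ‖y − (Φ + ΔΦ)β‖₂ = ‖y − Φβ‖₂ + ∑ᵢ cᵢ|βᵢ|. In particular, with all cᵢ = c, the robust regression problem is equivalent to the Lasso problem min_β { ‖y − Φβ‖₂ + c‖β‖₁ }. -/

import Mathlib

private lemma sign_mul_self' (x : ℝ) : Real.sign x * x = |x| := by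
  rcases lt_trichotomy x 0 with h | h | h
  · rw [Real.sign_of_neg h, abs_of_neg h]; ring
  · simp [h]
  · rw [Real.sign_of_pos h, abs_of_pos h]; ring

private lemma abs_sign_le_one (x : ℝ) : |Real.sign x| ≤ 1 := by
  rcases lt_trichotomy x 0 with h | h | h
  · simp [Real.sign_of_neg h]
  · simp [h]
  · simp [Real.sign_of_pos h]

/-- For the column-wise uncertainty set
`𝒰 = {(ΔΦ₁,…,ΔΦ_p) : ‖ΔΦᵢ‖₂ ≤ cᵢ}` with fixed `cᵢ ≥ 0`, for every `β` with
`y ≠ Φβ` the worst case equals `‖y − Φβ‖₂ + ∑ᵢ cᵢ|βᵢ|`; in particular with all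
`cᵢ = c` the robust regression problem is equivalent to the Lasso problem
`min_β { ‖y − Φβ‖₂ + c‖β‖₁ }`. -/
theorem stmt_5 (n p : ℕ) (y : EuclideanSpace ℝ (Fin n))
    (Φ : EuclideanSpace ℝ (Fin p) →L[ℝ] EuclideanSpace ℝ (Fin n))
    (cs : Fin p → ℝ) (hcs : ∀ i, 0 ≤ cs i) :
    (∀ β : EuclideanSpace ℝ (Fin p), y ≠ Φ β →
      IsGreatest ((fun D : Fin p → EuclideanSpace ℝ (Fin n) =>
          ‖y - (Φ β + ∑ i, β i • D i)‖) '' {D | ∀ i, ‖D i‖ ≤ cs i})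
        (‖y - Φ β‖ + ∑ i, cs i * |β i|)) ∧
    (∀ c : ℝ, 0 ≤ c → (∀ i, cs i = c) →
      (∀ β : EuclideanSpace ℝ (Fin p), y ≠ Φ β) →
      ∀ β₀ : EuclideanSpace ℝ (Fin p),
        ((∀ β, sSup ((fun D : Fin p → EuclideanSpace ℝ (Fin n) =>
              ‖y - (Φ β₀ + ∑ i, β₀ i • D i)‖) '' {D | ∀ i, ‖D i‖ ≤ cs i}) ≤
            sSup ((fun D : Fin p → EuclideanSpace ℝ (Fin n) =>
              ‖y - (Φ β + ∑ i, β i • D i)‖) '' {D | ∀ i, ‖D i‖ ≤ cs i})) ↔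
          (∀ β, ‖y - Φ β₀‖ + c * ∑ i, |β₀ i| ≤ ‖y - Φ β‖ + c * ∑ i, |β i|))) := by
  have key : ∀ β : EuclideanSpace ℝ (Fin p), y ≠ Φ β →
      IsGreatest ((fun D : Fin p → EuclideanSpace ℝ (Fin n) =>
          ‖y - (Φ β + ∑ i, β i • D i)‖) '' {D | ∀ i, ‖D i‖ ≤ cs i})
        (‖y - Φ β‖ + ∑ i, cs i * |β i|) := by
    intro β hβ
    set r : EuclideanSpace ℝ (Fin n) := y - Φ β with hr
    have hr0 : r ≠ 0 := sub_ne_zero.mpr hβ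
    have hrn : (0:ℝ) < ‖r‖ := norm_pos_iff.mpr hr0
    set S : ℝ := ∑ i, cs i * |β i| with hS
    have hS0 : 0 ≤ S := Finset.sum_nonneg fun i _ =>
      mul_nonneg (hcs i) (abs_nonneg _)
    constructor
    · refine ⟨fun i => (-(cs i * Real.sign (β i)) * ‖r‖⁻¹) • r, fun i => ?_, ?_⟩
      · rw [norm_smul, norm_mul, norm_neg, norm_mul, Real.norm_eq_abs,
          Real.norm_eq_abs, abs_of_nonneg (hcs i), norm_inv, norm_norm,
          mul_assoc, mul_assoc, inv_mul_cancel₀ hrn.ne', mul_one]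
        calc cs i * |Real.sign (β i)| ≤ cs i * 1 :=
              mul_le_mul_of_nonneg_left (abs_sign_le_one _) (hcs i)
          _ = cs i := mul_one _
      · have hsum : (∑ i, β i • ((-(cs i * Real.sign (β i)) * ‖r‖⁻¹) • r))
            = (-(S * ‖r‖⁻¹)) • r := by
          simp only [smul_smul]
          rw [← Finset.sum_smul]
          congr 1
          rw [hS, show -((∑ i, cs i * |β i|) * ‖r‖⁻¹)
              = ∑ i, -(cs i * |β i| * ‖r‖⁻¹) by
            rw [Finset.sum_mul, ← Finset.sum_neg_distrib]]
          refine Finset.sum_congr rfl fun i _ => ?_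
          have h : β i * (-(cs i * Real.sign (β i)) * ‖r‖⁻¹)
              = -(cs i * (Real.sign (β i) * β i) * ‖r‖⁻¹) := by ring
          rw [h, sign_mul_self']
        simp only [hsum]
        have : y - (Φ β + (-(S * ‖r‖⁻¹)) • r) = (1 + S * ‖r‖⁻¹) • r := by
          rw [add_smul, one_smul, neg_smul, sub_add_eq_sub_sub, sub_neg_eq_add, ← hr]
        rw [this, norm_smul, Real.norm_eq_abs, abs_of_nonneg
            (by positivity : (0:ℝ) ≤ 1 + S * ‖r‖⁻¹)]
        field_simp
    · rintro x ⟨D, hD, rfl⟩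
      have h1 : y - (Φ β + ∑ i, β i • D i) = r - ∑ i, β i • D i := by
        rw [hr, sub_add_eq_sub_sub]
      dsimp only
      rw [h1]
      refine (norm_sub_le _ _).trans (add_le_add_right ?_ _)
      refine (norm_sum_le _ _).trans (Finset.sum_le_sum fun i _ => ?_)
      rw [norm_smul, Real.norm_eq_abs, mul_comm]
      exact mul_le_mul_of_nonneg_right (hD i) (abs_nonneg _)
  refine ⟨key, fun c hc hcsc hne β₀ => ?_⟩
  have hval : ∀ β : EuclideanSpace ℝ (Fin p),
      sSup ((fun D : Fin p → EuclideanSpace ℝ (Fin n) =>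
        ‖y - (Φ β + ∑ i, β i • D i)‖) '' {D | ∀ i, ‖D i‖ ≤ cs i})
      = ‖y - Φ β‖ + c * ∑ i, |β i| := by
    intro β
    rw [(key β (hne β)).csSup_eq]
    congr 1
    rw [Finset.mul_sum]
    exact Finset.sum_congr rfl fun i _ => by rw [hcsc i]
  constructor
  · intro h β; rw [← hval β₀, ← hval β]; exact h β
  · intro h β; rw [hval β₀, hval β]; exact h β
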